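/- Let P be an irreducible stochastic matrix on a finite set I, j ∈ I fixed, and t_i ≥ 0 for all i. Define h_i = E_i[Σ_{n=0}^{D-1} t_{ξ_n}] where D is the first hitting time of j. Then h_i < ∞ for all i, h_j = 0, and (h_i) solves h_i = t_i + Σ_{k∈I} p_{i,k} h_k for all i ≠ j. In particular the discrete Poisson problem with boundary condition h_j = 0 has the expected-accumulated-cost vector as its unique solution. -/

import Mathlib

open MeasureTheory
open scoped ENNReal NNReal


namespace Stmt11Aux

variable {I : Type*} [Fintype I] [DecidableEq I]
variable {p : I → I → ℝ≥0∞} {j : I} {v : I → ℝ≥0∞}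

noncomputable def iter (p : I → I → ℝ≥0∞) (j : I) (v : I → ℝ≥0∞) : ℕ → I → ℝ≥0∞
  | 0 => fun i => if i = j then 0 else v i
  | n+1 => fun i => if i = j then 0 else ∑ k, p i k * iter p j v n k

lemma iter_zero (i : I) : iter p j v 0 i = if i = j then 0 else v i := rfl

lemma iter_succ (n : ℕ) (i : I) :
    iter p j v (n+1) i = if i = j then 0 else ∑ k, p i k * iter p j v n k := rfl

lemma iter_j (n : ℕ) : iter p j v n j = 0 := by
  cases n <;> simp [iter_zero, iter_succ]

lemma iter_le_mul {C : ℝ≥0∞} (hv : ∀ i, v i ≤ C) :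
    ∀ n i, iter p j v n i ≤ C * iter p j (fun _ => 1) n i := by
  intro n
  induction n with
  | zero => intro i; by_cases hi : i = j <;> simp [iter_zero, hi, hv i]
  | succ n ih =>
      intro i
      by_cases hi : i = j
      · simp [iter_succ, hi]
      · simp only [iter_succ, if_neg hi, Finset.mul_sum]
        refine Finset.sum_le_sum fun k _ => ?_
        calc p i k * iter p j v n k ≤ p i k * (C * iter p j (fun _ => 1) n k) :=
              mul_le_mul_right (ih k) _
          _ = C * (p i k * iter p j (fun _ => 1) n k) := by ring

lemma iter_one_le_one (hrow : ∀ i, ∑ k, p i k = 1) :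
    ∀ n i, iter p j (fun _ => 1) n i ≤ 1 := by
  intro n
  induction n with
  | zero => intro i; by_cases hi : i = j <;> simp [iter_zero, hi]
  | succ n ih =>
      intro i
      by_cases hi : i = j
      · simp [iter_succ, hi]
      · rw [iter_succ, if_neg hi]
        calc ∑ k, p i k * iter p j (fun _ => 1) n k ≤ ∑ k, p i k * 1 :=
              Finset.sum_le_sum fun k _ => mul_le_mul_right (ih k) _
          _ = 1 := by simp [hrow i]

lemma iter_one_succ_le (hrow : ∀ i, ∑ k, p i k = 1) (n : ℕ) (i : I) :
    iter p j (fun _ => 1) (n+1) i ≤ iter p j (fun _ => 1) n i := by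
  induction n generalizing i with
  | zero =>
      by_cases hi : i = j
      · simp [iter_succ, hi]
      · rw [iter_succ, if_neg hi, iter_zero, if_neg hi]
        calc ∑ k, p i k * iter p j (fun _ => 1) 0 k ≤ ∑ k, p i k * 1 :=
              Finset.sum_le_sum fun k _ => mul_le_mul_right
                (by rw [iter_zero]; split <;> simp) _
          _ = 1 := by simp [hrow i]
  | succ n ih =>
      by_cases hi : i = j
      · simp [iter_succ, hi]
      · rw [iter_succ, if_neg hi, iter_succ (n := n), if_neg hi]
        exact Finset.sum_le_sum fun k _ => mul_le_mul_right (ih k) _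

lemma iter_one_antitone (hrow : ∀ i, ∑ k, p i k = 1) (i : I) :
    Antitone (fun n => iter p j (fun _ => 1) n i) :=
  antitone_nat_of_succ_le fun n => iter_one_succ_le hrow n i

lemma rowsum_pow {P : Matrix I I ℝ≥0∞} (hP : ∀ i k, P i k = p i k)
    (hrow : ∀ i, ∑ k, p i k = 1) : ∀ n i, ∑ k, (P ^ n) i k = 1 := by
  intro n
  induction n with
  | zero => intro i; simp [Matrix.one_apply]
  | succ n ih =>
      intro i
      simp only [pow_succ', Matrix.mul_apply]
      rw [Finset.sum_comm]
      calc ∑ m, ∑ k, P i m * (P ^ n) m k = ∑ m, P i m * ∑ k, (P ^ n) m k := by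
            simp [Finset.mul_sum]
        _ = 1 := by simp [ih, hP, hrow i]

lemma iter_one_le_sub {P : Matrix I I ℝ≥0∞} (hP : ∀ i k, P i k = p i k)
    (hrow : ∀ i, ∑ k, p i k = 1) :
    ∀ n i, iter p j (fun _ => 1) n i ≤ ∑ k ∈ Finset.univ.erase j, (P ^ n) i k := by
  intro n
  induction n with
  | zero =>
      intro i
      by_cases hi : i = j
      · simp [iter_zero, hi]
      · rw [iter_zero, if_neg hi]
        calc (1:ℝ≥0∞) = ((1 : Matrix I I ℝ≥0∞)) i i := by simp [Matrix.one_apply]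
          _ ≤ ∑ k ∈ Finset.univ.erase j, ((1 : Matrix I I ℝ≥0∞)) i k :=
            Finset.single_le_sum (fun k _ => zero_le)
              (Finset.mem_erase.2 ⟨hi, Finset.mem_univ i⟩)
          _ = ∑ k ∈ Finset.univ.erase j, (P ^ 0) i k := by simp
  | succ n ih =>
      intro i
      by_cases hi : i = j
      · simp [iter_succ, hi]
      · rw [iter_succ, if_neg hi]
        calc ∑ m, p i m * iter p j (fun _ => 1) n m
            ≤ ∑ m, p i m * ∑ k ∈ Finset.univ.erase j, (P ^ n) m k :=
              Finset.sum_le_sum fun m _ => mul_le_mul_right (ih m) _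
          _ = ∑ k ∈ Finset.univ.erase j, ∑ m, p i m * (P ^ n) m k := by
              simp_rw [Finset.mul_sum]; exact Finset.sum_comm
          _ = ∑ k ∈ Finset.univ.erase j, (P ^ (n+1)) i k := by
              refine Finset.sum_congr rfl fun k _ => ?_
              rw [pow_succ', Matrix.mul_apply]
              simp [hP]

lemma exists_contraction {P : Matrix I I ℝ≥0∞} (hP : ∀ i k, P i k = p i k)
    (hrow : ∀ i, ∑ k, p i k = 1) (hirr : ∀ i, ∃ n : ℕ, 0 < (P ^ n) i j) :
    ∃ m : ℕ, 0 < m ∧ ∃ c : ℝ≥0∞, c < 1 ∧ ∀ i, iter p j (fun _ => 1) m i ≤ c := by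
  classical
  set N : I → ℕ := fun i => (hirr i).choose with hN
  set m : ℕ := Finset.univ.sup N + 1 with hm
  refine ⟨m, Nat.succ_pos _, Finset.univ.sup (iter p j (fun _ => 1) m), ?_,
    fun i => Finset.le_sup (Finset.mem_univ i)⟩
  rw [Finset.sup_lt_iff (by norm_num : (⊥ : ℝ≥0∞) < 1)]
  intro i _
  by_cases hi : i = j
  · have : iter p j (fun _ => 1) m j = 0 := by cases m <;> simp [iter_zero, iter_succ]
    rw [hi, this]; norm_num
  · have h1 : iter p j (fun _ => 1) m i ≤ iter p j (fun _ => 1) (N i) i :=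
      iter_one_antitone hrow i (le_trans (Finset.le_sup (Finset.mem_univ i)) (Nat.le_succ _))
    have h2 : iter p j (fun _ => 1) (N i) i ≤ ∑ k ∈ Finset.univ.erase j, (P ^ (N i)) i k :=
      iter_one_le_sub hP hrow _ _
    have h3 : ∑ k ∈ Finset.univ.erase j, (P ^ (N i)) i k < 1 := by
      have hpos : 0 < (P ^ (N i)) i j := (hirr i).choose_spec
      have hsum : ∑ k ∈ Finset.univ.erase j, (P ^ (N i)) i k + (P ^ (N i)) i j = 1 := by
        rw [← rowsum_pow hP hrow (N i) i]
        exact (Finset.sum_erase_add _ _ (Finset.mem_univ j))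
      have hne : ∑ k ∈ Finset.univ.erase j, (P ^ (N i)) i k ≠ ⊤ := by
        intro htop
        rw [htop] at hsum
        simp at hsum
      calc ∑ k ∈ Finset.univ.erase j, (P ^ (N i)) i k
          < ∑ k ∈ Finset.univ.erase j, (P ^ (N i)) i k + (P ^ (N i)) i j :=
            ENNReal.lt_add_right hne hpos.ne'
        _ = 1 := hsum
    exact lt_of_le_of_lt (le_trans h1 h2) h3

lemma iter_one_add_le {b : ℕ} {cb : ℝ≥0∞}
    (hcb : ∀ k, iter p j (fun _ => 1) b k ≤ cb) :
    ∀ a i, iter p j (fun _ => 1) (a + b) i ≤ iter p j (fun _ => 1) a i * cb := by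
  intro a
  induction a with
  | zero =>
      intro i
      by_cases hi : i = j
      · simp [hi, iter_j]
      · rw [zero_add, iter_zero, if_neg hi, one_mul]; exact hcb i
  | succ a ih =>
      intro i
      by_cases hi : i = j
      · simp [hi, iter_j]
      · have : a + 1 + b = (a + b) + 1 := by omega
        rw [this, iter_succ, if_neg hi, iter_succ, if_neg hi, Finset.sum_mul]
        refine Finset.sum_le_sum fun k _ => ?_
        rw [mul_assoc]
        exact mul_le_mul_right (ih k) _

lemma tsum_iter_one_ne_top (hrow : ∀ i, ∑ k, p i k = 1)
    {m : ℕ} (hm : 0 < m) {c : ℝ≥0∞} (hc : c < 1)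
    (hcontr : ∀ i, iter p j (fun _ => 1) m i ≤ c) (i : I) :
    ∑' n, iter p j (fun _ => 1) n i ≠ ⊤ := by
  have hpow : ∀ s i, iter p j (fun _ => 1) (m * s) i ≤ c ^ s := by
    intro s
    induction s with
    | zero => intro i; simpa using iter_one_le_one hrow 0 i
    | succ s ih =>
        intro i
        have : m * (s + 1) = m + m * s := by ring
        rw [this, pow_succ]
        calc iter p j (fun _ => 1) (m + m * s) i
            ≤ iter p j (fun _ => 1) m i * c ^ s := iter_one_add_le ih m i
          _ ≤ c * c ^ s := mul_le_mul_left (hcontr i) _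
          _ = c ^ s * c := mul_comm _ _
  have hbound : ∀ n, iter p j (fun _ => 1) n i ≤ c ^ (n / m) := by
    intro n
    calc iter p j (fun _ => 1) n i ≤ iter p j (fun _ => 1) (m * (n / m)) i :=
          iter_one_antitone hrow i (Nat.mul_div_le n m)
      _ ≤ c ^ (n / m) := hpow _ i
  have : NeZero m := ⟨hm.ne'⟩
  have key : ∑' n : ℕ, c ^ (n / m) ≠ ⊤ := by
    rw [← Equiv.tsum_eq (Nat.divModEquiv m).symm (fun n => c ^ (n / m))]
    have heq : ∀ q : ℕ × Fin m, c ^ (((Nat.divModEquiv m).symm q : ℕ) / m) = c ^ q.1 := by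
      rintro ⟨s, r⟩
      congr 1
      simp only [Nat.divModEquiv, Equiv.coe_fn_symm_mk]
      rw [Nat.add_div (by omega), Nat.mul_div_cancel _ hm, Nat.div_eq_of_lt r.isLt]
      simp [Nat.mod_eq_of_lt r.isLt, Nat.mul_mod_left]
    rw [tsum_congr heq]
    rw [ENNReal.tsum_prod (f := fun (s : ℕ) (_ : Fin m) => c ^ s)]
    simp only [tsum_fintype]
    have : ∑' (s : ℕ), ∑ _r : Fin m, c ^ s = ∑' (s : ℕ), (m : ℝ≥0∞) * c ^ s := by
      apply tsum_congr; intro s; simp [Finset.sum_const, nsmul_eq_mul]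
    rw [this, ENNReal.tsum_mul_left, ENNReal.tsum_geometric]
    refine ENNReal.mul_ne_top (by simp) ?_
    simp only [ne_eq, ENNReal.inv_eq_top]
    exact (tsub_pos_of_lt hc).ne'
  exact ne_top_of_le_ne_top key (ENNReal.tsum_le_tsum hbound)

noncomputable def pathSum (p : I → I → ℝ≥0∞) (j : I) (v : I → ℝ≥0∞) (n : ℕ) (i : I) : ℝ≥0∞ :=
  ∑ s : Fin (n+1) → I,
    (if ∀ k, s k ≠ j then v (s (Fin.last n)) else 0) *
      ((if s 0 = i then 1 else 0) * ∏ k : Fin n, p (s k.castSucc) (s k.succ))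

omit [Fintype I] [DecidableEq I] in
lemma cons_weight {n : ℕ} (a : I) (s : Fin (n+1) → I) :
    (∏ k : Fin (n+1), p ((Fin.cons a s : Fin (n+2) → I) k.castSucc)
        ((Fin.cons a s : Fin (n+2) → I) k.succ)) =
      p a (s 0) * ∏ k : Fin n, p (s k.castSucc) (s k.succ) := by
  rw [Fin.prod_univ_succ]
  have h0 : (Fin.cons a s : Fin (n+2) → I) ((0 : Fin (n+1)).castSucc) = a := by simp
  have h1 : (Fin.cons a s : Fin (n+2) → I) ((0 : Fin (n+1)).succ) = s 0 := Fin.cons_succ _ _ _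
  rw [h0, h1]
  congr 1
  all_goals
    refine Finset.prod_congr rfl fun k _ => ?_
    rw [← Fin.succ_castSucc, Fin.cons_succ, Fin.cons_succ]

lemma pathSum_eq_iter (n : ℕ) (i : I) : pathSum p j v n i = iter p j v n i := by
  induction n generalizing i with
  | zero =>
      rw [pathSum, Fintype.sum_equiv (Equiv.funUnique (Fin 1) I)
        (fun s : Fin 1 → I =>
          (if ∀ k, s k ≠ j then v (s (Fin.last 0)) else 0) *
            ((if s 0 = i then 1 else 0) * ∏ k : Fin 0, p (s k.castSucc) (s k.succ)))
        (fun a : I => (if a ≠ j then v a else 0) * (if a = i then 1 else 0))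
        (fun s => by simp [Fin.forall_fin_one, Equiv.funUnique])]
      rw [Finset.sum_eq_single i]
      · rw [if_pos rfl, mul_one, iter_zero]
        by_cases hi : i = j <;> simp [hi]
      · intro a _ ha; rw [if_neg ha, mul_zero]
      · intro hh; exact absurd (Finset.mem_univ i) hh
  | succ n ih =>
      have key : pathSum p j v (n+1) i =
          ∑ a : I, ∑ s : Fin (n+1) → I,
            (if a ≠ j ∧ ∀ k, s k ≠ j then v (s (Fin.last n)) else 0) *
              ((if a = i then 1 else 0) *
                (p a (s 0) * ∏ k : Fin n, p (s k.castSucc) (s k.succ))) := by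
        rw [pathSum]
        have e1 : (∑ q : I × (Fin (n+1) → I),
            (if q.1 ≠ j ∧ ∀ k, q.2 k ≠ j then v (q.2 (Fin.last n)) else 0) *
              ((if q.1 = i then 1 else 0) *
                (p q.1 (q.2 0) * ∏ k : Fin n, p (q.2 k.castSucc) (q.2 k.succ)))) =
            ∑ a : I, ∑ s : Fin (n+1) → I,
              (if a ≠ j ∧ ∀ k, s k ≠ j then v (s (Fin.last n)) else 0) *
                ((if a = i then 1 else 0) *
                  (p a (s 0) * ∏ k : Fin n, p (s k.castSucc) (s k.succ))) :=
          Fintype.sum_prod_type _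
        rw [← e1]
        refine (Fintype.sum_equiv (Fin.consEquiv (fun _ : Fin (n+2) => I)) _ _ fun q => ?_).symm
        rcases q with ⟨a, s⟩
        dsimp only
        have he : (Fin.consEquiv (fun _ : Fin (n+2) => I)) (a, s) = Fin.cons a s := rfl
        rw [he, cons_weight]
        have hc : (∀ k : Fin (n+2), (Fin.cons a s : Fin (n+2) → I) k ≠ j) =
            (a ≠ j ∧ ∀ k : Fin (n+1), s k ≠ j) := by
          apply propext; simp [Fin.forall_fin_succ]
        have hl : (Fin.cons a s : Fin (n+2) → I) (Fin.last (n+1)) = s (Fin.last n) := by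
          rw [← Fin.succ_last, Fin.cons_succ]
        have hz : (Fin.cons a s : Fin (n+2) → I) 0 = a := Fin.cons_zero _ _
        rw [hl, hz]
        congr 1
        exact (if_congr (iff_of_eq hc.symm) rfl rfl)
      rw [key, iter_succ]
      by_cases hi : i = j
      · rw [if_pos hi]
        refine Finset.sum_eq_zero fun a _ => Finset.sum_eq_zero fun s _ => ?_
        by_cases ha : a = i
        · have : ¬(a ≠ j ∧ ∀ k, s k ≠ j) := by rw [ha, hi]; simp
          rw [if_neg this, zero_mul]
        · rw [if_neg ha, zero_mul, mul_zero]
      · rw [if_neg hi, Finset.sum_eq_single i]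
        rotate_left
        · intro a _ ha
          refine Finset.sum_eq_zero fun s _ => by rw [if_neg ha, zero_mul, mul_zero]
        · intro hh; exact absurd (Finset.mem_univ i) hh
        have hR : ∑ k, p i k * iter p j v n k =
            ∑ s : Fin (n+1) → I,
              (if ∀ k, s k ≠ j then v (s (Fin.last n)) else 0) *
                (p i (s 0) * ∏ k : Fin n, p (s k.castSucc) (s k.succ)) := by
          simp only [← ih, pathSum, Finset.mul_sum]
          rw [Finset.sum_comm]
          refine Finset.sum_congr rfl fun s _ => ?_
          have hterm : ∀ k : I, p i k *
              ((if ∀ k, s k ≠ j then v (s (Fin.last n)) else 0) *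
                ((if s 0 = k then 1 else 0) * ∏ k : Fin n, p (s k.castSucc) (s k.succ))) =
              if s 0 = k then
                (if ∀ k, s k ≠ j then v (s (Fin.last n)) else 0) *
                  (p i k * ∏ k : Fin n, p (s k.castSucc) (s k.succ))
              else 0 := by
            intro k
            by_cases hk : s 0 = k
            · rw [if_pos hk, if_pos hk, one_mul]; ring
            · rw [if_neg hk, if_neg hk, zero_mul, mul_zero, mul_zero]
          rw [Finset.sum_congr rfl fun k _ => hterm k, Finset.sum_ite_eq,
            if_pos (Finset.mem_univ _)]
        rw [hR]
        refine Finset.sum_congr rfl fun s _ => ?_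
        by_cases hC : ∀ k, s k ≠ j
        · rw [if_pos ⟨hi, hC⟩, if_pos hC, if_pos rfl, one_mul]
        · rw [if_neg (fun hh => hC hh.2), if_neg hC, zero_mul, zero_mul]

lemma lintegral_eq_pathSum {Ω : Type*} [MeasurableSpace Ω]
    [MeasurableSpace I] [MeasurableSingletonClass I]
    (ξ : ℕ → Ω → I) (hmeas : ∀ n, Measurable (ξ n))
    (μ : Measure Ω) (p : I → I → ℝ≥0∞) (j i : I)
    (hmark : ∀ (n : ℕ) (s : ℕ → I),
      μ {ω | ∀ k ≤ n, ξ k ω = s k} =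
        (if s 0 = i then 1 else 0) * ∏ k ∈ Finset.range n, p (s k) (s (k + 1)))
    (v : I → ℝ≥0∞) (n : ℕ) :
    ∫⁻ ω, (if ∀ k ≤ n, ξ k ω ≠ j then v (ξ n ω) else 0) ∂μ = pathSum p j v n i := by
  classical
  set F : (Fin (n+1) → I) → ℝ≥0∞ :=
    fun s => if ∀ k, s k ≠ j then v (s (Fin.last n)) else 0 with hF
  set A : (Fin (n+1) → I) → Set Ω :=
    fun s => {ω | ∀ k : Fin (n+1), ξ (k : ℕ) ω = s k} with hA
  have hAmeas : ∀ s, MeasurableSet (A s) := by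
    intro s
    have : A s = ⋂ k : Fin (n+1), (ξ (k : ℕ)) ⁻¹' {s k} := by
      ext ω; simp [hA, Set.mem_iInter, Set.mem_preimage]
    rw [this]
    exact MeasurableSet.iInter fun k => (hmeas (k : ℕ)) (measurableSet_singleton (s k))
  have hpt : ∀ ω, (if ∀ k ≤ n, ξ k ω ≠ j then v (ξ n ω) else 0) =
      ∑ s : Fin (n+1) → I, (A s).indicator (fun _ => F s) ω := by
    intro ω
    rw [Finset.sum_eq_single (fun k : Fin (n+1) => ξ (k : ℕ) ω)]
    · rw [Set.indicator_of_mem (show ω ∈ A (fun k : Fin (n+1) => ξ (k : ℕ) ω) from fun k => rfl)]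
      have hiff : (∀ k : Fin (n+1), ξ (k : ℕ) ω ≠ j) ↔ (∀ k ≤ n, ξ k ω ≠ j) := by
        constructor
        · intro hh k hk; exact hh ⟨k, Nat.lt_succ_of_le hk⟩
        · intro hh k; exact hh (k : ℕ) (Nat.lt_succ_iff.mp k.isLt)
      show _ = if ∀ k : Fin (n+1), ξ (k : ℕ) ω ≠ j then v (ξ ((Fin.last n : Fin (n+1)) : ℕ) ω) else 0
      by_cases hcond : ∀ k ≤ n, ξ k ω ≠ j
      · rw [if_pos hcond, if_pos (hiff.mpr hcond), Fin.val_last]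
      · rw [if_neg hcond, if_neg (fun hh => hcond (hiff.mp hh))]
    · intro s _ hs
      refine Set.indicator_of_notMem (fun hmem => hs ?_) _
      funext k; exact (hmem k).symm
    · intro hh; exact absurd (Finset.mem_univ _) hh
  calc ∫⁻ ω, (if ∀ k ≤ n, ξ k ω ≠ j then v (ξ n ω) else 0) ∂μ
      = ∫⁻ ω, ∑ s : Fin (n+1) → I, (A s).indicator (fun _ => F s) ω ∂μ := by
        exact lintegral_congr hpt
    _ = ∑ s : Fin (n+1) → I, ∫⁻ ω, (A s).indicator (fun _ => F s) ω ∂μ :=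
        lintegral_finset_sum _ fun s _ => (measurable_const.indicator (hAmeas s))
    _ = ∑ s : Fin (n+1) → I, F s * μ (A s) := by
        refine Finset.sum_congr rfl fun s _ => ?_
        rw [lintegral_indicator (hAmeas s), setLIntegral_const]
    _ = pathSum p j v n i := by
        refine Finset.sum_congr rfl fun s _ => ?_
        congr 1
        set ext : ℕ → I := fun k => if hk : k < n+1 then s ⟨k, hk⟩ else s 0 with hext
        have hset : {ω | ∀ k ≤ n, ξ k ω = ext k} = A s := by
          ext ω
          constructor
          · intro hω k
            have h2 := hω (k : ℕ) (Nat.lt_succ_iff.mp k.isLt)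
            simp only [hext] at h2
            rwa [dif_pos k.isLt, Fin.eta] at h2
          · intro hω k hk
            simp only [hext]
            rw [dif_pos (Nat.lt_succ_of_le hk)]
            exact hω ⟨k, Nat.lt_succ_of_le hk⟩
        have hm := hmark n ext
        rw [hset] at hm
        rw [hm]
        have h0 : ext 0 = s 0 := by
          simp only [hext]; rw [dif_pos (Nat.succ_pos n)]; rfl
        have hw : ∏ k ∈ Finset.range n, p (ext k) (ext (k+1)) =
            ∏ k : Fin n, p (s k.castSucc) (s k.succ) := by
          rw [← Fin.prod_univ_eq_prod_range (fun k => p (ext k) (ext (k+1))) n]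
          refine Finset.prod_congr rfl fun k _ => ?_
          have hk1 : (k : ℕ) < n + 1 := Nat.lt_succ_of_lt k.isLt
          have hk2 : (k : ℕ) + 1 < n + 1 := Nat.succ_lt_succ k.isLt
          have e1 : ext (k : ℕ) = s k.castSucc := by
            simp only [hext]; rw [dif_pos hk1]; rfl
          have e2 : ext ((k : ℕ) + 1) = s k.succ := by
            simp only [hext]; rw [dif_pos hk2]; rfl
          rw [e1, e2]
        rw [h0, hw]

end Stmt11Aux

open Stmt11Aux


/-- For an irreducible stochastic matrix `p` on a finite set `I`, a fixed
target `j` and a nonnegative cost `t`, the expected accumulated cost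
`h i = E_i[∑_{n=0}^{D-1} t (ξ n)]` before the first hitting time `D` of `j` is finite
for every `i`, satisfies `h j = 0` and `h i = t i + ∑ k, p i k * h k` for `i ≠ j`;
moreover it is the unique finite solution of this discrete Poisson problem with
boundary condition `h j = 0`. -/
theorem stmt_11 {Ω : Type*} [MeasurableSpace Ω]
    {I : Type*} [Fintype I] [DecidableEq I] [MeasurableSpace I] [MeasurableSingletonClass I]
    (ξ : ℕ → Ω → I) (hmeas : ∀ n, Measurable (ξ n))
    (μ : I → Measure Ω) (hprob : ∀ i, IsProbabilityMeasure (μ i))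
    (p : I → I → ℝ≥0∞) (hrow : ∀ i, ∑ k, p i k = 1)
    (P : Matrix I I ℝ≥0∞) (hP : ∀ i k, P i k = p i k)
    (hirr : ∀ i k : I, ∃ n : ℕ, 0 < (P ^ n) i k)
    (hmarkov : ∀ (i : I) (n : ℕ) (s : ℕ → I),
      μ i {ω | ∀ k ≤ n, ξ k ω = s k} =
        (if s 0 = i then 1 else 0) * ∏ k ∈ Finset.range n, p (s k) (s (k + 1)))
    (j : I) (t : I → ℝ≥0) (h : I → ℝ≥0∞)
    (hdef : ∀ i, h i =
      ∫⁻ ω, (∑' n : ℕ,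
        if ∀ k ≤ n, ξ k ω ≠ j then (t (ξ n ω) : ℝ≥0∞) else 0) ∂(μ i)) :
    (∀ i, h i < ∞) ∧
    h j = 0 ∧
    (∀ i, i ≠ j → h i = (t i : ℝ≥0∞) + ∑ k, p i k * h k) ∧
    (∀ y : I → ℝ≥0∞, (∀ i, y i < ∞) → y j = 0 →
      (∀ i, i ≠ j → y i = (t i : ℝ≥0∞) + ∑ k, p i k * y k) → y = h) := by
  classical
  have hmeasf : ∀ (n : ℕ), Measurable
      (fun ω => if ∀ k ≤ n, ξ k ω ≠ j then ((t (ξ n ω) : ℝ≥0∞)) else 0) := by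
    intro n
    have hB : MeasurableSet {ω | ∀ k ≤ n, ξ k ω ≠ j} := by
      have : {ω | ∀ k ≤ n, ξ k ω ≠ j} = ⋂ k ∈ Set.Iic n, (ξ k) ⁻¹' ({j}ᶜ) := by
        ext ω; simp [Set.mem_iInter, Set.mem_preimage]
      rw [this]
      exact MeasurableSet.biInter (Set.to_countable _)
        fun k _ => (hmeas k) (measurableSet_singleton j).compl
    have hg : Measurable fun ω => ((t (ξ n ω) : ℝ≥0∞)) :=
      (measurable_of_countable (fun x : I => ((t x : ℝ≥0∞)))).comp (hmeas n)
    have heq : (fun ω => if ∀ k ≤ n, ξ k ω ≠ j then ((t (ξ n ω):ℝ≥0∞)) else 0)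
        = Set.indicator {ω | ∀ k ≤ n, ξ k ω ≠ j} (fun ω => ((t (ξ n ω):ℝ≥0∞))) := by
      funext ω
      by_cases hc : ∀ k ≤ n, ξ k ω ≠ j
      · rw [if_pos hc, Set.indicator_of_mem (show ω ∈ {ω' | ∀ k ≤ n, ξ k ω' ≠ j} from hc)]
      · rw [if_neg hc, Set.indicator_of_notMem (show ω ∉ {ω' | ∀ k ≤ n, ξ k ω' ≠ j} from hc)]
    rw [heq]
    exact hg.indicator hB
  have hH : ∀ i, h i = ∑' n, iter p j (fun x => ((t x : ℝ≥0∞))) n i := by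
    intro i
    rw [hdef i, lintegral_tsum (fun n => (hmeasf n).aemeasurable)]
    refine tsum_congr fun n => ?_
    rw [lintegral_eq_pathSum ξ hmeas (μ i) p j i (fun n s => hmarkov i n s)
      (fun x => ((t x : ℝ≥0∞))) n, pathSum_eq_iter]
  obtain ⟨m, hm, c, hc, hcontr⟩ := exists_contraction hP hrow (fun i => hirr i j)
  have htsum1 : ∀ i, ∑' n, iter p j (fun _ => (1:ℝ≥0∞)) n i ≠ ⊤ :=
    tsum_iter_one_ne_top hrow hm hc hcontr
  -- (1) finiteness
  have hvle : ∀ i, ((t i : ℝ≥0∞)) ≤ ((Finset.univ.sup t : ℝ≥0) : ℝ≥0∞) :=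
    fun i => ENNReal.coe_le_coe.2 (Finset.le_sup (Finset.mem_univ i))
  have hfin : ∀ i, h i < ⊤ := by
    intro i
    rw [hH i]
    calc ∑' n, iter p j (fun x => ((t x : ℝ≥0∞))) n i
        ≤ ∑' n, ((Finset.univ.sup t : ℝ≥0) : ℝ≥0∞) * iter p j (fun _ => 1) n i :=
          ENNReal.tsum_le_tsum fun n => iter_le_mul hvle n i
      _ = ((Finset.univ.sup t : ℝ≥0) : ℝ≥0∞) * ∑' n, iter p j (fun _ => 1) n i :=
          ENNReal.tsum_mul_left
      _ < ⊤ := ENNReal.mul_lt_top ENNReal.coe_lt_top (lt_top_iff_ne_top.2 (htsum1 i))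
  -- (2)
  have hj : h j = 0 := by
    rw [hH j]
    simp [iter_j]
  -- (3)
  have hpoisson : ∀ i, i ≠ j → h i = (t i : ℝ≥0∞) + ∑ k, p i k * h k := by
    intro i hi
    rw [hH i, tsum_eq_zero_add' ENNReal.summable]
    congr 1
    · rw [iter_zero, if_neg hi]
    · have hstep : ∀ n : ℕ, iter p j (fun x => ((t x : ℝ≥0∞))) (n+1) i =
          ∑ k, p i k * iter p j (fun x => ((t x : ℝ≥0∞))) n k := fun n => by
        rw [iter_succ, if_neg hi]
      rw [tsum_congr hstep,
        Summable.tsum_finsetSum (fun k _ => ENNReal.summable)]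
      refine Finset.sum_congr rfl fun k _ => ?_
      rw [ENNReal.tsum_mul_left, ← hH k]
  refine ⟨hfin, hj, hpoisson, ?_⟩
  -- (4) uniqueness
  intro y hyfin hyj hy
  have claim : ∀ N i, y i = (∑ n ∈ Finset.range N, iter p j (fun x => ((t x : ℝ≥0∞))) n i)
      + iter p j y N i := by
    intro N
    induction N with
    | zero =>
        intro i
        rw [Finset.range_zero, Finset.sum_empty, zero_add, iter_zero]
        by_cases hi : i = j
        · rw [if_pos hi, hi, hyj]
        · rw [if_neg hi]
    | succ N ih =>
        intro i
        by_cases hi : i = j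
        · rw [hi, hyj, iter_j]
          simp [iter_j]
        · rw [hy i hi]
          calc (t i : ℝ≥0∞) + ∑ k, p i k * y k
              = (t i : ℝ≥0∞) + ∑ k,
                  (p i k * ∑ n ∈ Finset.range N, iter p j (fun x => ((t x : ℝ≥0∞))) n k
                    + p i k * iter p j y N k) := by
                congr 1
                refine Finset.sum_congr rfl fun k _ => ?_
                rw [ih k, mul_add]
            _ = (t i : ℝ≥0∞) +
                  ((∑ k, p i k * ∑ n ∈ Finset.range N, iter p j (fun x => ((t x : ℝ≥0∞))) n k)
                    + ∑ k, p i k * iter p j y N k) := by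
                rw [Finset.sum_add_distrib]
            _ = (t i : ℝ≥0∞) +
                  ((∑ n ∈ Finset.range N, ∑ k, p i k * iter p j (fun x => ((t x : ℝ≥0∞))) n k)
                    + iter p j y (N+1) i) := by
                congr 2
                · simp_rw [Finset.mul_sum]
                  exact Finset.sum_comm
                · rw [iter_succ, if_neg hi]
            _ = (t i : ℝ≥0∞) +
                  ((∑ n ∈ Finset.range N, iter p j (fun x => ((t x : ℝ≥0∞))) (n+1) i)
                    + iter p j y (N+1) i) := by
                congr 2
                exact Finset.sum_congr rfl fun n _ => by rw [iter_succ, if_neg hi]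
            _ = (∑ n ∈ Finset.range (N+1), iter p j (fun x => ((t x : ℝ≥0∞))) n i)
                  + iter p j y (N+1) i := by
                rw [Finset.sum_range_succ' (fun n => iter p j (fun x => ((t x : ℝ≥0∞))) n i) N,
                  iter_zero, if_neg hi]
                ring
  have hhy : ∀ i, h i ≤ y i := by
    intro i
    rw [hH i, ENNReal.tsum_eq_iSup_nat]
    refine iSup_le fun N => ?_
    rw [claim N i]
    exact self_le_add_right _ _
  have hY : (Finset.univ.sup y) ≠ ⊤ := by
    rw [← lt_top_iff_ne_top, Finset.sup_lt_iff (by norm_num : (⊥ : ℝ≥0∞) < ⊤)]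
    exact fun i _ => hyfin i
  have hyh : ∀ i, y i ≤ h i := by
    intro i
    have htend : Filter.Tendsto (fun N => h i + Finset.univ.sup y * iter p j (fun _ => 1) N i)
        Filter.atTop (nhds (h i + Finset.univ.sup y * 0)) :=
      Filter.Tendsto.const_add _
        (ENNReal.Tendsto.const_mul (ENNReal.tendsto_atTop_zero_of_tsum_ne_top (htsum1 i)) (Or.inr hY))
    rw [mul_zero, add_zero] at htend
    refine ge_of_tendsto htend (Filter.Eventually.of_forall fun N => ?_)
    calc y i = (∑ n ∈ Finset.range N, iter p j (fun x => ((t x : ℝ≥0∞))) n i)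
          + iter p j y N i := claim N i
      _ ≤ h i + Finset.univ.sup y * iter p j (fun _ => 1) N i := by
          refine add_le_add ?_ ?_
          · rw [hH i]; exact ENNReal.sum_le_tsum _
          · exact iter_le_mul (fun k => Finset.le_sup (Finset.mem_univ k)) N i
  funext i
  exact le_antisymm (hyh i) (hhy i)
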